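/- Let ã, g̃ ∈ (0,∞)^d with Σ_{i=1}^d ã^i = 1 and Σ_{i=1}^d g̃^i = 1, and suppose c̃ ∈ (0,∞)^d with Σ_{i=1}^d c̃^i = 1 and λ ∈ ℝ satisfy, for every i, log(c̃^i/g̃^i) + 1 − ã^i/c̃^i + λ = 0. Then max_{1≤i≤d} ( ã^i + log g̃^i − 1 ) ≤ λ ≤ 0. -/
import Mathlib


open scoped BigOperators

/-- under the stationarity conditions
`log(c̃ⁱ/g̃ⁱ) + 1 − ãⁱ/c̃ⁱ + λ = 0` (with `ã`, `g̃`, `c̃` positive and `ã`, `g̃`, `c̃`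
frequency histograms as stated), the Lagrange multiplier satisfies
`maxᵢ (ãⁱ + log g̃ⁱ − 1) ≤ λ ≤ 0`, i.e. `ãⁱ + log g̃ⁱ − 1 ≤ λ` for every `i` and `λ ≤ 0`. -/
theorem lagrange_multiplier_bounds
    (d : ℕ) (a g c : Fin d → ℝ)
    (ha : ∀ i, 0 < a i) (hg : ∀ i, 0 < g i) (hc : ∀ i, 0 < c i)
    (ha1 : ∑ i, a i = 1) (hg1 : ∑ i, g i = 1) (hc1 : ∑ i, c i = 1) (lam : ℝ)
    (hstat : ∀ i, Real.log (c i / g i) + 1 - a i / c i + lam = 0) :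
    (∀ i, a i + Real.log (g i) - 1 ≤ lam) ∧ lam ≤ 0 := by
  have hci_le : ∀ i, c i ≤ 1 := by
    intro i
    rw [← hc1]
    exact Finset.single_le_sum (fun j _ => (hc j).le) (Finset.mem_univ i)
  constructor
  · intro i
    have h := hstat i
    have hlog : Real.log (c i / g i) = Real.log (c i) - Real.log (g i) :=
      Real.log_div (hc i).ne' (hg i).ne'
    have h1 : Real.log (c i) ≤ 0 := Real.log_nonpos (hc i).le (hci_le i)
    have h2 : a i ≤ a i / c i := by
      rw [le_div_iff₀ (hc i)]
      nlinarith [ha i, hci_le i, hc i]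
    linarith
  · have hle : ∀ i, c i * lam ≤ a i - 2 * c i + g i := by
      intro i
      have h := hstat i
      have hl : Real.log (g i / c i) ≤ g i / c i - 1 :=
        Real.log_le_sub_one_of_pos (div_pos (hg i) (hc i))
      have hlrev : Real.log (c i / g i) = - Real.log (g i / c i) := by
        rw [← Real.log_inv, inv_div]
      have e1 : c i * (a i / c i) = a i := mul_div_cancel₀ _ (hc i).ne'
      have e2 : c i * (g i / c i) = g i := mul_div_cancel₀ _ (hc i).ne'
      nlinarith [hc i, mul_le_mul_of_nonneg_left hl (hc i).le]
    have hsum : ∑ i, c i * lam ≤ ∑ i, (a i - 2 * c i + g i) :=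
      Finset.sum_le_sum (fun i _ => hle i)
    have h1 : ∑ i, c i * lam = lam := by
      rw [← Finset.sum_mul, hc1, one_mul]
    have h2 : ∑ i, (a i - 2 * c i + g i) = 0 := by
      simp [Finset.sum_add_distrib, Finset.sum_sub_distrib, ← Finset.mul_sum,
        ha1, hg1, hc1]
      norm_num
    linarith
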